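/- Fix d ≥ 1 and k ∈ {0,1,…,d}. For every x ∈ ℝ^d, the Capra biconjugate of the characteristic function δ of the level set {x : ℓ0(x) ≤ k} equals δ itself; explicitly, the extended-real supremum sup_{y ∈ ℝ^d} ( ¢(x,y) − ‖y‖_(k) ) equals 0 if ℓ0(x) ≤ k and equals +∞ if ℓ0(x) > k. -/

import Mathlib

noncomputable section

variable {d : ℕ}

/-- The projection `x_K` of `x` onto the coordinates in `K`
(the components outside `K` vanish). -/
def restr (K : Finset (Fin d)) (x : EuclideanSpace ℝ (Fin d)) : EuclideanSpace ℝ (Fin d) :=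
  WithLp.toLp 2 (fun i => if i ∈ K then x i else 0)

/-- The 2-k-symmetric gauge norm `‖y‖_(k) = sup {‖y_K‖ : |K| ≤ k}`
(equal to `0` for `k = 0`, by the convention `‖·‖_(0) = 0`). -/
def gaugeNorm (k : ℕ) (y : EuclideanSpace ℝ (Fin d)) : ℝ :=
  ⨆ K : {K : Finset (Fin d) // K.card ≤ k}, ‖restr (K : Finset (Fin d)) y‖

/-- The ℓ₀ pseudonorm: the number of nonzero components. -/
def l0 (x : EuclideanSpace ℝ (Fin d)) : ℕ :=
  (Finset.univ.filter fun i => x i ≠ 0).card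

open Classical in
/-- The Capra coupling `¢(x,y) = ⟨x,y⟩ / ‖x‖` for `x ≠ 0`, and `¢(0,y) = 0`. -/
def capra (x y : EuclideanSpace ℝ (Fin d)) : ℝ :=
  if x = 0 then 0 else (inner ℝ x y : ℝ) / ‖x‖

/-- The Capra conjugate of ℓ₀: `y ↦ max_{0 ≤ l ≤ d} (‖y‖_(l) − l)`. -/
def capraConjL0 (y : EuclideanSpace ℝ (Fin d)) : ℝ :=
  ⨆ l : Fin (d + 1), (gaugeNorm (l : ℕ) y - ((l : ℕ) : ℝ))

/-- `L₀(x) = sup_y (⟨x,y⟩ − max_{0 ≤ l ≤ d}(‖y‖_(l) − l))`, with values in `ℝ̄ = EReal`. -/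
def L0 (x : EuclideanSpace ℝ (Fin d)) : EReal :=
  ⨆ y : EuclideanSpace ℝ (Fin d), (((inner ℝ x y : ℝ) - capraConjL0 y : ℝ) : EReal)

/-- The k-support norm: the dual norm of the 2-k-symmetric gauge norm,
`‖y‖^sp_(k) = sup {⟨x,y⟩ : ‖x‖_(k) ≤ 1}`. -/
def suppNorm (k : ℕ) (y : EuclideanSpace ℝ (Fin d)) : ℝ :=
  sSup {c : ℝ | ∃ x : EuclideanSpace ℝ (Fin d), gaugeNorm k x ≤ 1 ∧ c = (inner ℝ x y : ℝ)}

/-- The unit ball of the k-support norm, with the convention `B^sp_(0) = {0}`. -/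
def Bsp (d k : ℕ) : Set (EuclideanSpace ℝ (Fin d)) :=
  if k = 0 then {0} else {y | suppNorm k y ≤ 1}

/-- The degenerate unit sphere `S_K = {x : x_{−K} = 0 and ‖x_K‖ = 1}`. -/
def sphK (K : Finset (Fin d)) : Set (EuclideanSpace ℝ (Fin d)) :=
  {x | (∀ i, i ∉ K → x i = 0) ∧ ‖restr K x‖ = 1}

/-- The degenerate unit ball `B_K = {x : x_{−K} = 0 and ‖x_K‖ ≤ 1}`. -/
def ballK (K : Finset (Fin d)) : Set (EuclideanSpace ℝ (Fin d)) :=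
  {x | (∀ i, i ∉ K → x i = 0) ∧ ‖restr K x‖ ≤ 1}

/- ### Auxiliary lemmas -/

instance idxNonempty (k : ℕ) : Nonempty {K : Finset (Fin d) // K.card ≤ k} :=
  ⟨⟨∅, by simp⟩⟩

lemma idxBdd (k : ℕ) (y : EuclideanSpace ℝ (Fin d)) :
    BddAbove (Set.range fun K : {K : Finset (Fin d) // K.card ≤ k} =>
      ‖restr (K : Finset (Fin d)) y‖) :=
  Set.Finite.bddAbove (Set.finite_range _)

lemma gaugeNorm_nonneg (k : ℕ) (y : EuclideanSpace ℝ (Fin d)) : 0 ≤ gaugeNorm k y :=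
  Real.iSup_nonneg fun _ => norm_nonneg _

lemma restr_zero (K : Finset (Fin d)) : restr K (0 : EuclideanSpace ℝ (Fin d)) = 0 := by
  ext i; simp [restr]

lemma gaugeNorm_zero' (k : ℕ) : gaugeNorm k (0 : EuclideanSpace ℝ (Fin d)) = 0 := by
  simp only [gaugeNorm, restr_zero, norm_zero]
  exact ciSup_const

lemma capra_zero_right (x : EuclideanSpace ℝ (Fin d)) : capra x 0 = 0 := by
  unfold capra
  split <;> simp

lemma restr_le_gauge {k : ℕ} (K : Finset (Fin d)) (hK : K.card ≤ k)
    (y : EuclideanSpace ℝ (Fin d)) : ‖restr K y‖ ≤ gaugeNorm k y :=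
  le_ciSup (idxBdd k y) (⟨K, hK⟩ : {K : Finset (Fin d) // K.card ≤ k})

lemma inner_restr_support (x y : EuclideanSpace ℝ (Fin d)) :
    (inner ℝ x y : ℝ) = (inner ℝ x (restr (Finset.univ.filter fun i => x i ≠ 0) y) : ℝ) := by
  simp only [PiLp.inner_apply, RCLike.inner_apply, starRingEnd_apply, star_trivial, restr]
  refine Finset.sum_congr rfl fun i _ => ?_
  by_cases h : x i = 0
  · simp [h]
  · simp [h]

lemma capra_le_gauge {k : ℕ} {x : EuclideanSpace ℝ (Fin d)} (h : l0 x ≤ k)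
    (y : EuclideanSpace ℝ (Fin d)) : capra x y ≤ gaugeNorm k y := by
  by_cases hx : x = 0
  · simpa [capra, hx] using gaugeNorm_nonneg k y
  · have hnx : 0 < ‖x‖ := norm_pos_iff.mpr hx
    rw [capra, if_neg hx, div_le_iff₀ hnx]
    calc (inner ℝ x y : ℝ) = inner ℝ x (restr (Finset.univ.filter fun i => x i ≠ 0) y) :=
          inner_restr_support x y
      _ ≤ ‖x‖ * ‖restr (Finset.univ.filter fun i => x i ≠ 0) y‖ := real_inner_le_norm _ _
      _ ≤ ‖x‖ * gaugeNorm k y :=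
          mul_le_mul_of_nonneg_left (restr_le_gauge _ h y) hnx.le
      _ = gaugeNorm k y * ‖x‖ := mul_comm _ _

lemma restr_lt_norm {K : Finset (Fin d)} {x : EuclideanSpace ℝ (Fin d)}
    {i₀ : Fin d} (hi₀ : i₀ ∉ K) (hx : x i₀ ≠ 0) : ‖restr K x‖ < ‖x‖ := by
  rw [EuclideanSpace.norm_eq, EuclideanSpace.norm_eq]
  apply Real.sqrt_lt_sqrt (Finset.sum_nonneg fun i _ => by positivity)
  apply Finset.sum_lt_sum
  · intro i _
    by_cases h : i ∈ K <;> simp [restr, h] <;> positivity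
  · refine ⟨i₀, Finset.mem_univ _, ?_⟩
    simpa [restr, hi₀] using pow_pos (norm_pos_iff.mpr hx) 2

lemma gauge_lt_norm {k : ℕ} {x : EuclideanSpace ℝ (Fin d)} (h : k < l0 x) :
    gaugeNorm k x < ‖x‖ := by
  obtain ⟨K₀, hK₀⟩ := Finite.exists_max
    (fun K : {K : Finset (Fin d) // K.card ≤ k} => ‖restr (K : Finset (Fin d)) x‖)
  have hsup : gaugeNorm k x ≤ ‖restr (K₀ : Finset (Fin d)) x‖ := ciSup_le hK₀
  refine hsup.trans_lt ?_
  have hns : ¬ (Finset.univ.filter fun i => x i ≠ 0) ⊆ (K₀ : Finset (Fin d)) := by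
    intro hsub
    have h1 : l0 x ≤ (K₀ : Finset (Fin d)).card := Finset.card_le_card hsub
    have h2 := K₀.2
    omega
  obtain ⟨i₀, hi₀mem, hi₀⟩ := Finset.not_subset.mp hns
  simp only [Finset.mem_filter, Finset.mem_univ, true_and] at hi₀mem
  exact restr_lt_norm hi₀ hi₀mem

lemma restr_smul (K : Finset (Fin d)) (c : ℝ) (x : EuclideanSpace ℝ (Fin d)) :
    restr K (c • x) = c • restr K x := by
  ext i
  simp only [restr, PiLp.smul_apply, smul_eq_mul, mul_ite, mul_zero]

lemma gauge_smul_le (k : ℕ) {c : ℝ} (hc : 0 ≤ c) (x : EuclideanSpace ℝ (Fin d)) :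
    gaugeNorm k (c • x) ≤ c * gaugeNorm k x := by
  apply ciSup_le
  intro K
  rw [restr_smul, norm_smul, Real.norm_eq_abs, abs_of_nonneg hc]
  exact mul_le_mul_of_nonneg_left (restr_le_gauge K.1 K.2 x) hc

lemma capra_self_smul {x : EuclideanSpace ℝ (Fin d)} (hx : x ≠ 0) (c : ℝ) :
    capra x (c • x) = c * ‖x‖ := by
  have hnx : ‖x‖ ≠ 0 := norm_ne_zero_iff.mpr hx
  simp only [capra, if_neg hx, real_inner_smul_right, real_inner_self_eq_norm_sq]
  field_simp

/-- the Capra biconjugate of the characteristic function of the level set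
`{x : ℓ₀(x) ≤ k}` is the characteristic function itself: the extended-real supremum
`sup_y (¢(x,y) − ‖y‖_(k))` equals `0` if `ℓ₀(x) ≤ k`, and `+∞` otherwise. -/
theorem capra_biconjugate_char_level_set (d : ℕ) (hd : 1 ≤ d) (k : ℕ) (hk : k ≤ d)
    (x : EuclideanSpace ℝ (Fin d)) :
    (⨆ y : EuclideanSpace ℝ (Fin d), ((capra x y - gaugeNorm k y : ℝ) : EReal)) =
      if l0 x ≤ k then (0 : EReal) else (⊤ : EReal) := by
  split_ifs with hle
  · apply le_antisymm
    · apply iSup_le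
      intro y
      have h : capra x y - gaugeNorm k y ≤ 0 := sub_nonpos.mpr (capra_le_gauge hle y)
      exact_mod_cast h
    · have h0 := le_iSup
        (fun y : EuclideanSpace ℝ (Fin d) => ((capra x y - gaugeNorm k y : ℝ) : EReal)) 0
      simpa [capra_zero_right, gaugeNorm_zero'] using h0
  · push_neg at hle
    rw [iSup_eq_top]
    intro b hb
    have hx : x ≠ 0 := by
      intro h
      rw [h] at hle
      simp [l0] at hle
    have hε : 0 < ‖x‖ - gaugeNorm k x := sub_pos.mpr (gauge_lt_norm hle)
    obtain ⟨r, hbr, -⟩ := EReal.exists_between_coe_real hb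
    set ε := ‖x‖ - gaugeNorm k x with hεdef
    set c := max 0 ((r + 1) / ε) with hc
    have hc0 : 0 ≤ c := le_max_left _ _
    refine ⟨c • x, lt_of_lt_of_le hbr ?_⟩
    rw [EReal.coe_le_coe_iff]
    have h1 : capra x (c • x) = c * ‖x‖ := capra_self_smul hx c
    have h2 : gaugeNorm k (c • x) ≤ c * gaugeNorm k x := gauge_smul_le k hc0 x
    have h3 : r + 1 ≤ c * ε := (div_le_iff₀ hε).mp (le_max_right 0 _)
    have h4 : c * ε = c * ‖x‖ - c * gaugeNorm k x := mul_sub c _ _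
    linarith
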